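/- Let l be a line in the plane and let L be a finite set of at least two other lines, each intersecting l, with no three lines of L ∪ {l} concurrent. If some two lines of L intersect at a point X not on l, then there exists a triangle with one side contained in l, whose other two sides lie on lines of L, whose third vertex lies on the same side of l as X, and whose open interior meets no line of L. -/

import Mathlib

/-- An affine line `{p | a x + b y = c}` in the plane. -/
structure Line where
  a : ℝ
  b : ℝ
  c : ℝ
  nd : (a, b) ≠ (0, 0)

/-- The set of points of the line. -/
def Line.carrier (l : Line) : Set (ℝ × ℝ) := {p | l.a * p.1 + l.b * p.2 = l.c}

/-- The signed side function of the line. -/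
def Line.side (l : Line) (p : ℝ × ℝ) : ℝ := l.a * p.1 + l.b * p.2 - l.c

/-- `p` and `q` lie strictly on the same side of `l`. -/
def SameSide (l : Line) (p q : ℝ × ℝ) : Prop := 0 < l.side p * l.side q

attribute [local instance] Classical.propDecidable

lemma mem_iff_side (l : Line) (p : ℝ × ℝ) : p ∈ l.carrier ↔ l.side p = 0 := by
  simp [Line.carrier, Line.side, sub_eq_zero]

lemma nd' (l : Line) : l.a ≠ 0 ∨ l.b ≠ 0 := by
  rcases Classical.em (l.a = 0) with h | h
  · right; intro hb; exact l.nd (by simp [h, hb])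
  · left; exact h

lemma side_combo (k : Line) (α β γ : ℝ) (P Q A : ℝ × ℝ) (h : α + β + γ = 1) :
    k.side (α • P + β • Q + γ • A) = α * k.side P + β * k.side Q + γ * k.side A := by
  simp only [Line.side, Prod.fst_add, Prod.snd_add, Prod.smul_fst, Prod.smul_snd, smul_eq_mul]
  linear_combination k.c * h

lemma hull_combo {P Q A z : ℝ × ℝ} (hz : z ∈ convexHull ℝ ({P, Q, A} : Set (ℝ × ℝ))) :
    ∃ α β γ : ℝ, 0 ≤ α ∧ 0 ≤ β ∧ 0 ≤ γ ∧ α + β + γ = 1 ∧ z = α • P + β • Q + γ • A := by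
  rw [show ({P, Q, A} : Set (ℝ × ℝ)) = insert P {Q, A} from rfl,
    convexHull_insert ⟨Q, by simp⟩, convexHull_pair] at hz
  rw [mem_convexJoin] at hz
  obtain ⟨x, hx, y, hy, hz⟩ := hz
  rw [Set.mem_singleton_iff] at hx
  subst hx
  obtain ⟨c, d, hc, hd, hcd, rfl⟩ := hy
  obtain ⟨a, b, ha, hb, hab, rfl⟩ := hz
  refine ⟨a, b * c, b * d, ha, by positivity, by positivity, by nlinarith, ?_⟩
  simp [smul_add, smul_smul, add_assoc]

lemma line_unique_aux (m n : Line) (p q r : ℝ × ℝ) (hpq : p ≠ q)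
    (h1 : m.side p = 0) (h2 : m.side q = 0) (h3 : n.side p = 0) (h4 : n.side q = 0)
    (h5 : n.side r = 0) : m.side r = 0 := by
  simp only [Line.side] at *
  have hdp : p.1 ≠ q.1 ∨ p.2 ≠ q.2 := by
    by_contra h
    push_neg at h
    exact hpq (Prod.ext h.1 h.2)
  have hdet : (p.1 - q.1) * (r.2 - p.2) - (p.2 - q.2) * (r.1 - p.1) = 0 := by
    have h6 : n.a * ((p.1 - q.1) * (r.2 - p.2) - (p.2 - q.2) * (r.1 - p.1)) = 0 := by
      linear_combination (r.2 - p.2) * h3 - (r.2 - p.2) * h4 - (p.2 - q.2) * h5 + (p.2 - q.2) * h3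
    have h7 : n.b * ((p.1 - q.1) * (r.2 - p.2) - (p.2 - q.2) * (r.1 - p.1)) = 0 := by
      linear_combination -(r.1 - p.1) * h3 + (r.1 - p.1) * h4 + (p.1 - q.1) * h5 - (p.1 - q.1) * h3
    rcases nd' n with h | h
    · exact mul_left_cancel₀ h (by rw [mul_zero]; exact h6)
    · exact mul_left_cancel₀ h (by rw [mul_zero]; exact h7)
  rcases hdp with h | h
  · apply mul_left_cancel₀ (sub_ne_zero.mpr h)
    rw [mul_zero]
    linear_combination (r.1 - p.1) * h1 - (r.1 - p.1) * h2 + m.b * hdet + (p.1 - q.1) * h1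
  · apply mul_left_cancel₀ (sub_ne_zero.mpr h)
    rw [mul_zero]
    linear_combination (r.2 - p.2) * h1 - (r.2 - p.2) * h2 - m.a * hdet + (p.2 - q.2) * h1

lemma interior_pos (k : Line) (s : ℝ) (hs : s ≠ 0) (C : Set (ℝ × ℝ))
    (hC : ∀ y ∈ C, 0 ≤ k.side y * s) {z : ℝ × ℝ} (hz : z ∈ interior C) :
    0 < k.side z * s := by
  rcases lt_or_ge 0 (k.side z * s) with h | h
  · exact h
  exfalso
  have hz0 : k.side z = 0 := by
    have := hC z (interior_subset hz)
    rcases mul_eq_zero.mp (le_antisymm h this) with h' | h'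
    · exact h'
    · exact absurd h' hs
  obtain ⟨ε, hε, hball⟩ := Metric.mem_nhds_iff.mp (mem_interior_iff_mem_nhds.mp hz)
  set δ : ℝ := ε / (1 + |s| * (|k.a| + |k.b|)) with hδdef
  have hden : (0:ℝ) < 1 + |s| * (|k.a| + |k.b|) := by positivity
  have hδ : 0 < δ := div_pos hε hden
  set w : ℝ × ℝ := (z.1 - δ * s * k.a, z.2 - δ * s * k.b) with hw
  have key : δ * (1 + |s| * (|k.a| + |k.b|)) = ε := by
    rw [hδdef, div_mul_cancel₀ _ hden.ne']
  have hwball : w ∈ Metric.ball z ε := by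
    rw [Metric.mem_ball, Prod.dist_eq]
    have h1 : dist w.1 z.1 = δ * (|s| * |k.a|) := by
      rw [Real.dist_eq]; simp [hw, abs_mul, abs_of_pos hδ, mul_assoc]
    have h2 : dist w.2 z.2 = δ * (|s| * |k.b|) := by
      rw [Real.dist_eq]; simp [hw, abs_mul, abs_of_pos hδ, mul_assoc]
    have ha := abs_nonneg k.a
    have hb := abs_nonneg k.b
    have hsa := abs_nonneg s
    apply max_lt
    · rw [h1, ← key]
      have h3 : 0 < δ * (1 + |s| * |k.b|) := by positivity
      nlinarith
    · rw [h2, ← key]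
      have h3 : 0 < δ * (1 + |s| * |k.a|) := by positivity
      nlinarith
  have hwC := hC w (hball hwball)
  have hside : k.side w = k.side z - δ * s * (k.a ^ 2 + k.b ^ 2) := by
    simp only [Line.side, hw]; ring
  have hab : 0 < k.a ^ 2 + k.b ^ 2 := by
    rcases nd' k with h | h
    · positivity
    · positivity
  rw [hside, hz0] at hwC
  have hs2 : 0 < s ^ 2 := by positivity
  nlinarith [mul_pos (mul_pos hδ hs2) hab]

set_option maxHeartbeats 1000000 in

/-- given a line `l`, a finite set `L` of at least two other
lines each meeting `l`, with no three lines of `L ∪ {l}` concurrent, if two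
lines of `L` meet at a point `X` off `l`, then there is a triangle with one
side on `l`, its other two sides on lines of `L`, its apex on the same side
of `l` as `X`, whose open interior meets no line of `L`. -/
theorem stmt_12 (l : Line) (L : Finset Line) (hcard : 2 ≤ L.card)
    (hl : l ∉ L)
    (hmeet : ∀ m ∈ L, ∃ p, p ∈ l.carrier ∧ p ∈ m.carrier)
    (hconc : ∀ m₁ ∈ insert l L, ∀ m₂ ∈ insert l L, ∀ m₃ ∈ insert l L,
      m₁ ≠ m₂ → m₂ ≠ m₃ → m₁ ≠ m₃ →
      ¬ ∃ p, p ∈ m₁.carrier ∧ p ∈ m₂.carrier ∧ p ∈ m₃.carrier)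
    (m₀ n₀ : Line) (hm₀ : m₀ ∈ L) (hn₀ : n₀ ∈ L) (hmn₀ : m₀ ≠ n₀)
    (X : ℝ × ℝ) (hX₁ : X ∈ m₀.carrier) (hX₂ : X ∈ n₀.carrier)
    (hXl : X ∉ l.carrier) :
    ∃ m ∈ L, ∃ n ∈ L, m ≠ n ∧ ∃ P Q A : ℝ × ℝ,
      P ∈ l.carrier ∧ P ∈ m.carrier ∧ Q ∈ l.carrier ∧ Q ∈ n.carrier ∧
      A ∈ m.carrier ∧ A ∈ n.carrier ∧ A ∉ l.carrier ∧ SameSide l A X ∧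
      ∀ k ∈ L, ∀ z ∈ interior (convexHull ℝ ({P, Q, A} : Set (ℝ × ℝ))),
        z ∉ k.carrier := by
  classical
  have hne : ∀ m ∈ L, m ≠ l := fun m hm he => hl (he ▸ hm)
  have uniq : ∀ m ∈ L, ∀ n ∈ L, m ≠ n → ∀ p q : ℝ × ℝ,
      p ∈ m.carrier → p ∈ n.carrier → q ∈ m.carrier → q ∈ n.carrier → p = q := by
    intro m hm n hn hmn p q hpm hpn hqm hqn
    by_contra hpq
    obtain ⟨p₀, hp₀l, hp₀n⟩ := hmeet n hn
    have hp₀m : p₀ ∈ m.carrier := by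
      rw [mem_iff_side]
      exact line_unique_aux m n p q p₀ hpq ((mem_iff_side _ _).1 hpm) ((mem_iff_side _ _).1 hqm)
        ((mem_iff_side _ _).1 hpn) ((mem_iff_side _ _).1 hqn) ((mem_iff_side _ _).1 hp₀n)
    exact hconc l (Finset.mem_insert_self l L) m (Finset.mem_insert_of_mem hm)
      n (Finset.mem_insert_of_mem hn) (Ne.symm (hne m hm)) hmn (Ne.symm (hne n hn))
      ⟨p₀, hp₀l, hp₀m, hp₀n⟩
  set H : Set ℝ := {h | ∃ m ∈ L, ∃ n ∈ L, m ≠ n ∧ ∃ A : ℝ × ℝ,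
    A ∈ m.carrier ∧ A ∈ n.carrier ∧ SameSide l A X ∧ h = |l.side A|} with hHdef
  have hXside : l.side X ≠ 0 := fun h => hXl ((mem_iff_side l X).2 h)
  have hHne : H.Nonempty :=
    ⟨|l.side X|, m₀, hm₀, n₀, hn₀, hmn₀, X, hX₁, hX₂, mul_self_pos.mpr hXside, rfl⟩
  have hHfin : H.Finite := by
    apply Set.Finite.subset (Finset.finite_toSet ((L ×ˢ L).image fun mn : Line × Line =>
      if h : ∃ A : ℝ × ℝ, A ∈ mn.1.carrier ∧ A ∈ mn.2.carrier ∧ SameSide l A X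
      then |l.side h.choose| else 0))
    rintro h ⟨m, hm, n, hn, hmn, A, hAm, hAn, hAs, rfl⟩
    simp only [Finset.coe_image, Set.mem_image, Finset.mem_coe, Finset.mem_product]
    refine ⟨(m, n), ⟨hm, hn⟩, ?_⟩
    have hex : ∃ A : ℝ × ℝ, A ∈ m.carrier ∧ A ∈ n.carrier ∧ SameSide l A X := ⟨A, hAm, hAn, hAs⟩
    rw [dif_pos hex,
      uniq m hm n hn hmn hex.choose A hex.choose_spec.1 hex.choose_spec.2.1 hAm hAn]
  obtain ⟨h₀, hh₀, hmin⟩ := Set.exists_min_image H id hHfin hHne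
  obtain ⟨m, hm, n, hn, hmn, A, hAm, hAn, hAs, hA0⟩ := hh₀
  obtain ⟨P, hPl, hPm⟩ := hmeet m hm
  obtain ⟨Q, hQl, hQn⟩ := hmeet n hn
  have hsA : l.side A ≠ 0 := by
    intro h
    have := hAs
    unfold SameSide at this
    rw [h, zero_mul] at this
    exact lt_irrefl 0 this
  have hAnl : A ∉ l.carrier := fun h => hsA ((mem_iff_side l A).1 h)
  refine ⟨m, hm, n, hn, hmn, P, Q, A, hPl, hPm, hQl, hQn, hAm, hAn, hAnl, hAs, ?_⟩
  intro k hk z hz hzk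
  have hsP := (mem_iff_side l P).1 hPl
  have hsQ := (mem_iff_side l Q).1 hQl
  have hmP := (mem_iff_side m P).1 hPm
  have hmA := (mem_iff_side m A).1 hAm
  have hnQ := (mem_iff_side n Q).1 hQn
  have hnA := (mem_iff_side n A).1 hAn
  have hmQ : m.side Q ≠ 0 := by
    intro h
    exact hconc m (Finset.mem_insert_of_mem hm) n (Finset.mem_insert_of_mem hn)
      l (Finset.mem_insert_self l L) hmn (hne n hn) (hne m hm)
      ⟨Q, (mem_iff_side m Q).2 h, hQn, hQl⟩
  have hnP : n.side P ≠ 0 := by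
    intro h
    exact hconc n (Finset.mem_insert_of_mem hn) m (Finset.mem_insert_of_mem hm)
      l (Finset.mem_insert_self l L) (Ne.symm hmn) (hne m hm) (hne n hn)
      ⟨P, (mem_iff_side n P).2 h, hPm, hPl⟩
  have hTl : ∀ y ∈ convexHull ℝ ({P, Q, A} : Set (ℝ × ℝ)), 0 ≤ l.side y * l.side A := by
    intro y hy
    obtain ⟨α, β, γ, ha, hb, hg, habg, rfl⟩ := hull_combo hy
    rw [side_combo l α β γ P Q A habg, hsP, hsQ]
    nlinarith [mul_nonneg hg (mul_self_nonneg (l.side A))]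
  have hTm : ∀ y ∈ convexHull ℝ ({P, Q, A} : Set (ℝ × ℝ)), 0 ≤ m.side y * m.side Q := by
    intro y hy
    obtain ⟨α, β, γ, ha, hb, hg, habg, rfl⟩ := hull_combo hy
    rw [side_combo m α β γ P Q A habg, hmP, hmA]
    nlinarith [mul_nonneg hb (mul_self_nonneg (m.side Q))]
  have hTn : ∀ y ∈ convexHull ℝ ({P, Q, A} : Set (ℝ × ℝ)), 0 ≤ n.side y * n.side P := by
    intro y hy
    obtain ⟨α, β, γ, ha, hb, hg, habg, rfl⟩ := hull_combo hy
    rw [side_combo n α β γ P Q A habg, hnQ, hnA]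
    nlinarith [mul_nonneg ha (mul_self_nonneg (n.side P))]
  have hl1 : 0 < l.side z * l.side A := interior_pos l (l.side A) hsA _ hTl hz
  have hm1 : 0 < m.side z * m.side Q := interior_pos m (m.side Q) hmQ _ hTm hz
  have hn1 : 0 < n.side z * n.side P := interior_pos n (n.side P) hnP _ hTn hz
  have hzk' : k.side z = 0 := (mem_iff_side k z).1 hzk
  have hkm : k ≠ m := by
    rintro rfl
    rw [hzk', zero_mul] at hm1
    exact lt_irrefl 0 hm1
  have hkn : k ≠ n := by
    rintro rfl
    rw [hzk', zero_mul] at hn1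
    exact lt_irrefl 0 hn1
  obtain ⟨α, β, γ, ha, hb, hg, habg, hzc⟩ := hull_combo (interior_subset hz)
  have hsz : l.side z = γ * l.side A := by
    rw [hzc, side_combo l α β γ P Q A habg, hsP, hsQ]; ring
  have hmz : m.side z = β * m.side Q := by
    rw [hzc, side_combo m α β γ P Q A habg, hmP, hmA]; ring
  have hnz : n.side z = α * n.side P := by
    rw [hzc, side_combo n α β γ P Q A habg, hnQ, hnA]; ring
  have hγ : 0 < γ := by
    rw [hsz] at hl1; nlinarith [mul_self_nonneg (l.side A)]
  have hβ : 0 < β := by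
    rw [hmz] at hm1; nlinarith [mul_self_nonneg (m.side Q)]
  have hα : 0 < α := by
    rw [hnz] at hn1; nlinarith [mul_self_nonneg (n.side P)]
  set u := k.side P with hu_def
  set v := k.side Q with hv_def
  set w := k.side A with hw_def
  have hcombo : α * u + β * v + γ * w = 0 := by
    rw [← side_combo k α β γ P Q A habg, ← hzc, hzk']
  have hu : u ≠ 0 := by
    intro h
    exact hconc k (Finset.mem_insert_of_mem hk) m (Finset.mem_insert_of_mem hm)
      l (Finset.mem_insert_self l L) hkm (hne m hm) (hne k hk)
      ⟨P, (mem_iff_side k P).2 h, hPm, hPl⟩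
  have hv : v ≠ 0 := by
    intro h
    exact hconc k (Finset.mem_insert_of_mem hk) n (Finset.mem_insert_of_mem hn)
      l (Finset.mem_insert_self l L) hkn (hne n hn) (hne k hk)
      ⟨Q, (mem_iff_side k Q).2 h, hQn, hQl⟩
  have hw : w ≠ 0 := by
    intro h
    exact hconc k (Finset.mem_insert_of_mem hk) m (Finset.mem_insert_of_mem hm)
      n (Finset.mem_insert_of_mem hn) hkm hmn hkn
      ⟨A, (mem_iff_side k A).2 h, hAm, hAn⟩
  have habs : 0 < |l.side A| := abs_pos.2 hsA
  have hcase : u * w < 0 ∨ v * w < 0 := by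
    by_contra hc
    push_neg at hc
    have h1 : 0 < u * w := lt_of_le_of_ne hc.1 (Ne.symm (mul_ne_zero hu hw))
    have h2 : 0 < v * w := lt_of_le_of_ne hc.2 (Ne.symm (mul_ne_zero hv hw))
    rcases hw.lt_or_gt with hwneg | hwpos
    · have hu' : u < 0 := by nlinarith
      have hv' : v < 0 := by nlinarith
      nlinarith [mul_neg_of_pos_of_neg hα hu', mul_neg_of_pos_of_neg hβ hv',
        mul_neg_of_pos_of_neg hγ hwneg]
    · have hu' : 0 < u := by nlinarith
      have hv' : 0 < v := by nlinarith
      nlinarith [mul_pos hα hu', mul_pos hβ hv', mul_pos hγ hwpos]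
  rcases hcase with hx | hx
  · -- k crosses side PA : smaller triangle on (k, m)
    have huw : u - w ≠ 0 := by
      intro h
      have : u = w := by linarith
      rw [this] at hx
      nlinarith [mul_self_nonneg w]
    set t := u / (u - w) with htdef
    have hsign : (0 < u ∧ 0 < u - w) ∨ (u < 0 ∧ u - w < 0) := by
      rcases hu.lt_or_gt with h | h
      · right; exact ⟨h, by nlinarith⟩
      · left; exact ⟨h, by nlinarith⟩
    have ht0 : 0 < t := by
      rcases hsign with ⟨h1, h2⟩ | ⟨h1, h2⟩
      · exact div_pos h1 h2
      · exact div_pos_iff.mpr (Or.inr ⟨h1, h2⟩)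
    have ht1 : t < 1 := by
      rw [htdef, div_lt_one_iff]
      rcases hsign with ⟨h1, h2⟩ | ⟨h1, h2⟩
      · left; refine ⟨h2, by nlinarith⟩
      · right; right; refine ⟨h2, by nlinarith⟩
    set Y : ℝ × ℝ := (1 - t) • P + (0:ℝ) • Q + t • A with hYdef
    have hYk : k.side Y = 0 := by
      rw [hYdef, side_combo k (1 - t) 0 t P Q A (by ring), ← hu_def, ← hv_def, ← hw_def, htdef]
      field_simp
      ring
    have hYm : m.side Y = 0 := by
      rw [hYdef, side_combo m (1 - t) 0 t P Q A (by ring), hmP, hmA]; ring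
    have hYl : l.side Y = t * l.side A := by
      rw [hYdef, side_combo l (1 - t) 0 t P Q A (by ring), hsP, hsQ]; ring
    have hYs : SameSide l Y X := by
      unfold SameSide
      rw [hYl, mul_assoc]
      exact mul_pos ht0 hAs
    have hmem : |l.side Y| ∈ H :=
      ⟨k, hk, m, hm, hkm, Y, (mem_iff_side k Y).2 hYk, (mem_iff_side m Y).2 hYm, hYs, rfl⟩
    have hge := hmin _ hmem
    simp only [id] at hge
    rw [hA0] at hge
    rw [hYl, abs_mul, abs_of_pos ht0] at hge
    nlinarith
  · -- k crosses side QA : smaller triangle on (k, n)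
    have huw : v - w ≠ 0 := by
      intro h
      have : v = w := by linarith
      rw [this] at hx
      nlinarith [mul_self_nonneg w]
    set t := v / (v - w) with htdef
    have hsign : (0 < v ∧ 0 < v - w) ∨ (v < 0 ∧ v - w < 0) := by
      rcases hv.lt_or_gt with h | h
      · right; exact ⟨h, by nlinarith⟩
      · left; exact ⟨h, by nlinarith⟩
    have ht0 : 0 < t := by
      rcases hsign with ⟨h1, h2⟩ | ⟨h1, h2⟩
      · exact div_pos h1 h2
      · exact div_pos_iff.mpr (Or.inr ⟨h1, h2⟩)
    have ht1 : t < 1 := by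
      rw [htdef, div_lt_one_iff]
      rcases hsign with ⟨h1, h2⟩ | ⟨h1, h2⟩
      · left; refine ⟨h2, by nlinarith⟩
      · right; right; refine ⟨h2, by nlinarith⟩
    set Y : ℝ × ℝ := (0:ℝ) • P + (1 - t) • Q + t • A with hYdef
    have hYk : k.side Y = 0 := by
      rw [hYdef, side_combo k 0 (1 - t) t P Q A (by ring), ← hu_def, ← hv_def, ← hw_def, htdef]
      field_simp
      ring
    have hYn : n.side Y = 0 := by
      rw [hYdef, side_combo n 0 (1 - t) t P Q A (by ring), hnQ, hnA]; ring
    have hYl : l.side Y = t * l.side A := by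
      rw [hYdef, side_combo l 0 (1 - t) t P Q A (by ring), hsP, hsQ]; ring
    have hYs : SameSide l Y X := by
      unfold SameSide
      rw [hYl, mul_assoc]
      exact mul_pos ht0 hAs
    have hmem : |l.side Y| ∈ H :=
      ⟨k, hk, n, hn, hkn, Y, (mem_iff_side k Y).2 hYk, (mem_iff_side n Y).2 hYn, hYs, rfl⟩
    have hge := hmin _ hmem
    simp only [id] at hge
    rw [hA0] at hge
    rw [hYl, abs_mul, abs_of_pos ht0] at hge
    nlinarith
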